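/- Let λ, ν ∈ ℝ, M ≤ N in ℕ, and let z : ℕ → ℂ^{2n}, zₖ = (xₖ; uₖ), satisfy xₖ = 𝒜ₖ x_{k+1} + ℬₖ u_{k+1} for all k ∈ {M,…,N}. Then F_λ^{[M,N]}(z) = F_ν^{[M,N]}(z) + (ν − λ) Σ_{k=M}^{N} xₖ* 𝒲ₖ xₖ. Consequently, if λ ≤ ν and system (S_ν) is disconjugate on [M, N+1], then system (S_λ) is disconjugate on [M, N+1]. -/

import Mathlib

open Matrix Filter
open scoped ComplexOrder

noncomputable def Jmat (n : ℕ) : Matrix (Fin n ⊕ Fin n) (Fin n ⊕ Fin n) ℂ :=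
  Matrix.fromBlocks 0 1 (-1) 0

noncomputable def PsiMat {n : ℕ} (W : ℕ → Matrix (Fin n) (Fin n) ℂ) (k : ℕ) :
    Matrix (Fin n ⊕ Fin n) (Fin n ⊕ Fin n) ℂ :=
  Matrix.fromBlocks (W k) 0 0 0

noncomputable def Vmat {n : ℕ} (S : ℕ → Matrix (Fin n ⊕ Fin n) (Fin n ⊕ Fin n) ℂ)
    (W : ℕ → Matrix (Fin n) (Fin n) ℂ) (k : ℕ) :
    Matrix (Fin n ⊕ Fin n) (Fin n ⊕ Fin n) ℂ :=
  -(Jmat n * PsiMat W k * S k)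

/-- The quadratic functional `F_λ^{[M,N]}` associated with the system, where
`𝒞ₖ(λ) = 𝒞ₖ + λ𝒲ₖ𝒜ₖ` and `𝒟ₖ(λ) = 𝒟ₖ + λ𝒲ₖℬₖ`. -/
noncomputable def Fquad {n : ℕ} (A B C D W : ℕ → Matrix (Fin n) (Fin n) ℂ) (lam : ℝ)
    (x u : ℕ → Fin n → ℂ) (M N : ℕ) : ℂ :=
  -(∑ k ∈ Finset.Icc M N,
      (star (x (k + 1)) ⬝ᵥ (((C k + (lam : ℂ) • (W k * A k))ᴴ * A k) *ᵥ x (k + 1))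
        + 2 * ((star (x (k + 1)) ⬝ᵥ (((C k + (lam : ℂ) • (W k * A k))ᴴ * B k) *ᵥ u (k + 1))).re : ℂ)
        + star (u (k + 1)) ⬝ᵥ (((D k + (lam : ℂ) • (W k * B k))ᴴ * B k) *ᵥ u (k + 1))))

/-- System `(S_ν)` is disconjugate on `[M, N+1]`: for every admissible `z = (x; u)` on `[M,N]`
with `x_M = 0 = x_{N+1}` and `x` not identically zero on `[M,N+1]`, the value
`F_ν^{[M,N]}(z)` is a positive real number. -/
def DisconjugateOn {n : ℕ} (A B C D W : ℕ → Matrix (Fin n) (Fin n) ℂ) (nu : ℝ)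
    (M N : ℕ) : Prop :=
  ∀ x u : ℕ → Fin n → ℂ,
    (∀ k, M ≤ k → k ≤ N → x k = A k *ᵥ x (k + 1) + B k *ᵥ u (k + 1)) →
    x M = 0 → x (N + 1) = 0 →
    (∃ k, M ≤ k ∧ k ≤ N + 1 ∧ x k ≠ 0) →
    (Fquad A B C D W nu x u M N).im = 0 ∧ 0 < (Fquad A B C D W nu x u M N).re

lemma conj_dot {n : ℕ} (M : Matrix (Fin n) (Fin n) ℂ) (v w : Fin n → ℂ) :
    star (star v ⬝ᵥ (M *ᵥ w)) = star w ⬝ᵥ (Mᴴ *ᵥ v) := by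
  rw [star_dotProduct, star_star, star_mulVec, dotProduct_mulVec]

lemma quad_expand {n : ℕ} (W A B : Matrix (Fin n) (Fin n) ℂ) (hW : Wᴴ = W) (v w : Fin n → ℂ) :
    star (A *ᵥ v + B *ᵥ w) ⬝ᵥ (W *ᵥ (A *ᵥ v + B *ᵥ w)) =
      star v ⬝ᵥ ((Aᴴ * W * A) *ᵥ v) + 2 * ((star v ⬝ᵥ ((Aᴴ * W * B) *ᵥ w)).re : ℂ)
        + star w ⬝ᵥ ((Bᴴ * W * B) *ᵥ w) := by
  have h2 : star w ⬝ᵥ ((Bᴴ * W * A) *ᵥ v) = star (star v ⬝ᵥ ((Aᴴ * W * B) *ᵥ w)) := by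
    rw [conj_dot]
    congr 1
    simp [Matrix.conjTranspose_mul, hW, Matrix.mul_assoc]
  have h3 : star v ⬝ᵥ ((Aᴴ * W * B) *ᵥ w) + star w ⬝ᵥ ((Bᴴ * W * A) *ᵥ v)
      = 2 * ((star v ⬝ᵥ ((Aᴴ * W * B) *ᵥ w)).re : ℂ) := by
    rw [h2]
    rw [Complex.star_def, Complex.add_conj]; push_cast; ring
  calc star (A *ᵥ v + B *ᵥ w) ⬝ᵥ (W *ᵥ (A *ᵥ v + B *ᵥ w))
      = star v ⬝ᵥ ((Aᴴ * W * A) *ᵥ v) + (star v ⬝ᵥ ((Aᴴ * W * B) *ᵥ w)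
        + star w ⬝ᵥ ((Bᴴ * W * A) *ᵥ v)) + star w ⬝ᵥ ((Bᴴ * W * B) *ᵥ w) := by
        simp only [star_add, add_dotProduct, mulVec_add, dotProduct_add, star_mulVec,
          dotProduct_mulVec, add_vecMul, vecMul_vecMul, Matrix.mul_assoc, add_dotProduct]
        ring
    _ = _ := by rw [h3]

lemma term_shift {n : ℕ} (A B C D W : Matrix (Fin n) (Fin n) ℂ) (hW : Wᴴ = W) (t : ℝ)
    (v w : Fin n → ℂ) :
    star v ⬝ᵥ (((C + (t : ℂ) • (W * A))ᴴ * A) *ᵥ v)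
      + 2 * ((star v ⬝ᵥ (((C + (t : ℂ) • (W * A))ᴴ * B) *ᵥ w)).re : ℂ)
      + star w ⬝ᵥ (((D + (t : ℂ) • (W * B))ᴴ * B) *ᵥ w)
    = (star v ⬝ᵥ ((Cᴴ * A) *ᵥ v) + 2 * ((star v ⬝ᵥ ((Cᴴ * B) *ᵥ w)).re : ℂ)
        + star w ⬝ᵥ ((Dᴴ * B) *ᵥ w))
      + (t : ℂ) * (star (A *ᵥ v + B *ᵥ w) ⬝ᵥ (W *ᵥ (A *ᵥ v + B *ᵥ w))) := by
  rw [quad_expand W A B hW v w]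
  simp only [conjTranspose_add, conjTranspose_smul, Complex.star_def, Complex.conj_ofReal,
    conjTranspose_mul, hW, add_mul, smul_mul_assoc, add_mulVec, smul_mulVec,
    dotProduct_add, dotProduct_smul, smul_eq_mul, Complex.add_re, Complex.re_ofReal_mul,
    Matrix.mul_assoc]
  push_cast
  ring

/-- `F_λ^{[M,N]}(z) = F_ν^{[M,N]}(z) + (ν − λ) Σ xₖ*𝒲ₖxₖ` for any `z`
admissible on `[M,N]`; consequently, if `λ ≤ ν` and `(S_ν)` is disconjugate on `[M,N+1]`,
then `(S_λ)` is disconjugate on `[M,N+1]`. -/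
theorem statement11 {n : ℕ} (hn : 1 ≤ n)
    (S : ℕ → Matrix (Fin n ⊕ Fin n) (Fin n ⊕ Fin n) ℂ)
    (A B C D W : ℕ → Matrix (Fin n) (Fin n) ℂ)
    (hS : ∀ k, (S k)ᴴ * Jmat n * S k = Jmat n)
    (hblocks : ∀ k, S k = Matrix.fromBlocks (A k) (B k) (C k) (D k))
    (hW : ∀ k, (W k).PosDef)
    (lam nu : ℝ) (M N : ℕ) (hMN : M ≤ N) :
    (∀ x u : ℕ → Fin n → ℂ,
        (∀ k, M ≤ k → k ≤ N → x k = A k *ᵥ x (k + 1) + B k *ᵥ u (k + 1)) →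
        Fquad A B C D W lam x u M N =
          Fquad A B C D W nu x u M N +
            ((nu - lam : ℝ) : ℂ) * ∑ k ∈ Finset.Icc M N, star (x k) ⬝ᵥ (W k *ᵥ x k)) ∧
      (lam ≤ nu → DisconjugateOn A B C D W nu M N → DisconjugateOn A B C D W lam M N) := by
  have part1 : ∀ x u : ℕ → Fin n → ℂ,
      (∀ k, M ≤ k → k ≤ N → x k = A k *ᵥ x (k + 1) + B k *ᵥ u (k + 1)) →
      Fquad A B C D W lam x u M N =
        Fquad A B C D W nu x u M N +
          ((nu - lam : ℝ) : ℂ) * ∑ k ∈ Finset.Icc M N, star (x k) ⬝ᵥ (W k *ᵥ x k) := by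
    intro x u hadm
    have key : ∀ k ∈ Finset.Icc M N,
        (star (x (k + 1)) ⬝ᵥ (((C k + (lam : ℂ) • (W k * A k))ᴴ * A k) *ᵥ x (k + 1))
          + 2 * ((star (x (k + 1)) ⬝ᵥ (((C k + (lam : ℂ) • (W k * A k))ᴴ * B k) *ᵥ u (k + 1))).re : ℂ)
          + star (u (k + 1)) ⬝ᵥ (((D k + (lam : ℂ) • (W k * B k))ᴴ * B k) *ᵥ u (k + 1)))
        = (star (x (k + 1)) ⬝ᵥ (((C k + (nu : ℂ) • (W k * A k))ᴴ * A k) *ᵥ x (k + 1))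
          + 2 * ((star (x (k + 1)) ⬝ᵥ (((C k + (nu : ℂ) • (W k * A k))ᴴ * B k) *ᵥ u (k + 1))).re : ℂ)
          + star (u (k + 1)) ⬝ᵥ (((D k + (nu : ℂ) • (W k * B k))ᴴ * B k) *ᵥ u (k + 1)))
          + ((lam - nu : ℝ) : ℂ) * (star (x k) ⬝ᵥ (W k *ᵥ x k)) := by
      intro k hk
      simp only [Finset.mem_Icc] at hk
      rw [term_shift (A k) (B k) (C k) (D k) (W k) (hW k).1 lam,
        term_shift (A k) (B k) (C k) (D k) (W k) (hW k).1 nu,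
        ← hadm k hk.1 hk.2]
      push_cast
      ring
    unfold Fquad
    rw [Finset.sum_congr rfl key, Finset.sum_add_distrib, ← Finset.mul_sum]
    push_cast
    ring
  refine ⟨part1, ?_⟩
  intro hle hdis x u hadm h0 hN1 hx
  obtain ⟨him, hre⟩ := hdis x u hadm h0 hN1 hx
  have hid := part1 x u hadm
  set s := ∑ k ∈ Finset.Icc M N, star (x k) ⬝ᵥ (W k *ᵥ x k) with hs_def
  have hs : (0 : ℂ) ≤ s := by
    apply Finset.sum_nonneg
    intro k _
    exact (hW k).posSemidef.dotProduct_mulVec_nonneg (x k)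
  rw [Complex.le_def] at hs
  simp only [Complex.zero_re, Complex.zero_im] at hs
  rw [hid]
  constructor
  · simp [Complex.add_im, Complex.mul_im, him, ← hs.2]
  · have : 0 ≤ (nu - lam) * s.re := mul_nonneg (by linarith) hs.1
    simp only [Complex.add_re, Complex.mul_re, Complex.ofReal_re, Complex.ofReal_im, ← hs.2]
    nlinarith
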